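/- Let V ∈ L^p(ℝ³) ∩ L^q(ℝ³) with p < 3/2 < q, and let 1/p + 1/p' = 1 (so that 1 − 3/p' > 0). Then there is a constant C < ∞, independent of λ and λ₀, such that for all λ, λ₀ ∈ ℝ: sup_{y ∈ ℝ³} ∫_{ℝ³} |V(x)| · |e^{iλ|x−y|} − e^{iλ₀|x−y|}| / |x−y| dx ≤ C |λ−λ₀|^{1−3/p'} ‖V‖. Consequently the operator VB⁺(λ) := VR₀⁺(λ²) − VR₀⁺(λ₀²) satisfies ‖VB⁺(λ)‖_{L¹ → L¹} ≤ C |λ−λ₀|^{1−3/p'} ‖V‖. -/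

import Mathlib

open MeasureTheory Complex
open scoped ENNReal NNReal

noncomputable section

abbrev E3 : Type := EuclideanSpace ℝ (Fin 3)

/-- `max(‖V‖_{L^p}, ‖V‖_{L^q})`. -/
def Vnorm (p q : ℝ) (V : E3 → ℝ) : ℝ :=
  max ((eLpNorm V (ENNReal.ofReal p) volume).toReal)
      ((eLpNorm V (ENNReal.ofReal q) volume).toReal)

/-! ### Auxiliary lemmas -/

lemma norm_exp_I_mul (s : ℝ) : ‖Complex.exp (Complex.I * s)‖ = 1 := by
  rw [show Complex.I * (s : ℂ) = (s : ℂ) * Complex.I by ring]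
  exact Complex.norm_exp_ofReal_mul_I s

lemma hasDerivAt_expI (t : ℝ) :
    HasDerivAt (fun u : ℝ => Complex.exp (Complex.I * u))
      (Complex.I * Complex.exp (Complex.I * t)) t := by
  have h2 : HasDerivAt (fun w : ℂ => Complex.I * w) (Complex.I * 1) (t : ℂ) :=
    (hasDerivAt_id (t : ℂ)).const_mul Complex.I
  have h1 : HasDerivAt (fun w : ℂ => Complex.exp (Complex.I * w))
      (Complex.I * Complex.exp (Complex.I * (t : ℂ))) (t : ℂ) := by
    have h3 := (Complex.hasDerivAt_exp (Complex.I * (t : ℂ))).comp (t : ℂ) h2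
    simp only [Function.comp_def] at h3
    refine h3.congr_deriv ?_
    ring
  exact h1.comp_ofReal

lemma exp_diff_le (a b r : ℝ) (hr : 0 ≤ r) :
    ‖Complex.exp (Complex.I * a * r) - Complex.exp (Complex.I * b * r)‖ ≤ min 2 (|a - b| * r) := by
  have key : ∀ s : ℝ, Complex.I * (s : ℂ) * (r : ℂ) = Complex.I * ((s * r : ℝ) : ℂ) := by
    intro s; push_cast; ring
  rw [key a, key b]
  refine le_min ?_ ?_
  · calc ‖Complex.exp (Complex.I * ((a * r : ℝ) : ℂ)) -
        Complex.exp (Complex.I * ((b * r : ℝ) : ℂ))‖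
        ≤ ‖Complex.exp (Complex.I * ((a * r : ℝ) : ℂ))‖ +
          ‖Complex.exp (Complex.I * ((b * r : ℝ) : ℂ))‖ := norm_sub_le _ _
      _ = 2 := by rw [norm_exp_I_mul, norm_exp_I_mul]; norm_num
  · have mvt := Convex.norm_image_sub_le_of_norm_hasDerivWithin_le
      (f := fun u : ℝ => Complex.exp (Complex.I * u))
      (f' := fun u : ℝ => Complex.I * Complex.exp (Complex.I * u))
      (s := Set.univ) (C := 1)
      (fun u _ => (hasDerivAt_expI u).hasDerivWithinAt)
      (fun u _ => by rw [norm_mul, norm_exp_I_mul]; simp)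
      convex_univ (Set.mem_univ (b * r)) (Set.mem_univ (a * r))
    calc ‖Complex.exp (Complex.I * ((a * r : ℝ) : ℂ)) -
        Complex.exp (Complex.I * ((b * r : ℝ) : ℂ))‖
        ≤ 1 * ‖(a * r) - (b * r)‖ := mvt
      _ = |a - b| * r := by
          rw [one_mul, Real.norm_eq_abs, ← sub_mul, abs_mul, _root_.abs_of_nonneg hr]

lemma min_div_le_three_div (r : ℝ) (hr : 0 ≤ r) : min 2 r / r ≤ 3 / (1 + r) := by
  rcases eq_or_lt_of_le hr with h0 | h0
  · rw [← h0]; norm_num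
  · rw [div_le_div_iff₀ h0 (by linarith)]
    rcases le_total r 2 with h | h
    · rw [min_eq_right h]; nlinarith
    · rw [min_eq_left h]; nlinarith

lemma base_integrable {s : ℝ} (hs : 3 < s) :
    Integrable (fun x : E3 => (min 2 ‖x‖ / ‖x‖) ^ s) volume := by
  have hfin : (Module.finrank ℝ E3 : ℝ) < s := by
    rw [finrank_euclideanSpace_fin]; exact_mod_cast hs
  have hint := ((integrable_one_add_norm (E := E3) (μ := volume) hfin).const_mul ((3 : ℝ) ^ s))
  refine hint.mono' ?_ ?_
  · apply Measurable.aestronglyMeasurable; fun_prop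
  · filter_upwards with x
    have h1 : 0 ≤ min 2 ‖x‖ / ‖x‖ :=
      div_nonneg (le_min (by norm_num) (norm_nonneg x)) (norm_nonneg x)
    rw [Real.norm_eq_abs, _root_.abs_of_nonneg (Real.rpow_nonneg h1 s)]
    calc (min 2 ‖x‖ / ‖x‖) ^ s ≤ (3 / (1 + ‖x‖)) ^ s :=
          Real.rpow_le_rpow h1 (min_div_le_three_div _ (norm_nonneg x)) (by linarith)
      _ = 3 ^ s * (1 + ‖x‖) ^ (-s) := by
          rw [Real.div_rpow (by norm_num) (by positivity), Real.rpow_neg (by positivity),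
            div_eq_mul_inv]

lemma pt_eq {s : ℝ} (hs : s ≠ 0) {Δ : ℝ} (hΔ : 0 < Δ) (x : E3) :
    (min 2 (Δ * ‖x‖) / ‖x‖) ^ s = Δ ^ s * (min 2 ‖Δ • x‖ / ‖Δ • x‖) ^ s := by
  have hnorm : ‖Δ • x‖ = Δ * ‖x‖ := by
    rw [norm_smul, Real.norm_eq_abs, _root_.abs_of_pos hΔ]
  rw [hnorm]
  rcases eq_or_ne ‖x‖ 0 with h | h
  · rw [h, mul_zero]
    norm_num [Real.zero_rpow hs]
  · have hx : 0 < ‖x‖ := lt_of_le_of_ne (norm_nonneg x) (Ne.symm h)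
    have hmin : 0 ≤ min 2 (Δ * ‖x‖) :=
      le_min (by norm_num) (by positivity)
    have heq : min 2 (Δ * ‖x‖) / ‖x‖ = Δ * (min 2 (Δ * ‖x‖) / (Δ * ‖x‖)) := by
      field_simp
    rw [heq, Real.mul_rpow hΔ.le (div_nonneg hmin (by positivity))]

lemma scaled_integral {s : ℝ} (hs : s ≠ 0) {Δ : ℝ} (hΔ : 0 < Δ) (y : E3) :
    (∫ x : E3, (min 2 (Δ * ‖x - y‖) / ‖x - y‖) ^ s)
      = Δ ^ (s - 3) * ∫ x : E3, (min 2 ‖x‖ / ‖x‖) ^ s := by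
  have step1 : (∫ x : E3, (min 2 (Δ * ‖x - y‖) / ‖x - y‖) ^ s)
      = ∫ x : E3, (min 2 (Δ * ‖x‖) / ‖x‖) ^ s :=
    integral_sub_right_eq_self (fun x : E3 => (min 2 (Δ * ‖x‖) / ‖x‖) ^ s) y
  rw [step1]
  have step2 : (∫ x : E3, (min 2 (Δ * ‖x‖) / ‖x‖) ^ s)
      = ∫ x : E3, Δ ^ s * ((fun z : E3 => (min 2 ‖z‖ / ‖z‖) ^ s) (Δ • x)) := by
    congr 1; ext x; exact pt_eq hs hΔ x
  rw [step2, integral_const_mul,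
    MeasureTheory.Measure.integral_comp_smul volume (fun z : E3 => (min 2 ‖z‖ / ‖z‖) ^ s) Δ]
  have h3 : Module.finrank ℝ E3 = 3 := finrank_euclideanSpace_fin
  rw [h3, smul_eq_mul]
  have habs : |((Δ : ℝ) ^ (3 : ℕ))⁻¹| = Δ ^ (-(3 : ℝ)) := by
    rw [_root_.abs_of_pos (by positivity), ← Real.rpow_natCast Δ 3, ← Real.rpow_neg hΔ.le]
    norm_num
  rw [habs, ← mul_assoc, ← Real.rpow_add hΔ]
  norm_num [sub_eq_add_neg]

lemma integral_le_of_lintegral_le (f : E3 → ℝ) (hf : ∀ x, 0 ≤ f x) {B : ℝ} (hB : 0 ≤ B)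
    (h : (∫⁻ x, ENNReal.ofReal (f x)) ≤ ENNReal.ofReal B) : (∫ x, f x) ≤ B := by
  by_cases hi : Integrable f volume
  · rw [integral_eq_lintegral_of_nonneg_ae (Filter.Eventually.of_forall hf)
      hi.aestronglyMeasurable]
    calc (∫⁻ x, ENNReal.ofReal (f x)).toReal ≤ (ENNReal.ofReal B).toReal :=
          ENNReal.toReal_mono ENNReal.ofReal_ne_top h
      _ = B := ENNReal.toReal_ofReal hB
  · rw [integral_undef hi]; exact hB

lemma core_bound (p p' : ℝ) (hp1 : 1 ≤ p) (hp : p < 3 / 2) (hp' : 1 / p + 1 / p' = 1)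
    (V : E3 → ℝ) (hVp : MemLp V (ENNReal.ofReal p) volume) :
    ∃ A : ℝ, 0 < A ∧ ∀ (Δ : ℝ), 0 ≤ Δ → ∀ y : E3,
      (∫⁻ x : E3, (‖V x‖₊ : ℝ≥0∞) * ENNReal.ofReal (min 2 (Δ * ‖x - y‖) / ‖x - y‖))
        ≤ ENNReal.ofReal (A * Δ ^ (1 - 3 / p')
            * (eLpNorm V (ENNReal.ofReal p) volume).toReal) := by
  set N := (eLpNorm V (ENNReal.ofReal p) volume).toReal with hNdef
  have hN : 0 ≤ N := ENNReal.toReal_nonneg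
  rcases eq_or_lt_of_le hp1 with hpe | h1p
  · -- case p = 1
    have hp'0 : p' = 0 := by
      have h : 1 / p' = 0 := by rw [← hpe] at hp'; linarith [hp']
      rw [one_div] at h; exact inv_eq_zero.mp h
    have he : (1 : ℝ) - 3 / p' = 1 := by rw [hp'0]; norm_num
    refine ⟨1, one_pos, fun Δ hΔ y => ?_⟩
    have hb : ∀ x : E3, ENNReal.ofReal (min 2 (Δ * ‖x - y‖) / ‖x - y‖) ≤ ENNReal.ofReal Δ := by
      intro x
      apply ENNReal.ofReal_le_ofReal
      rcases eq_or_lt_of_le (norm_nonneg (x - y)) with h | h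
      · rw [← h, div_zero]; exact hΔ
      · rw [div_le_iff₀ h]; exact min_le_right _ _
    have h1 : eLpNorm V 1 volume = eLpNorm V (ENNReal.ofReal p) volume := by
      rw [← hpe, ENNReal.ofReal_one]
    calc ∫⁻ x : E3, (‖V x‖₊ : ℝ≥0∞) * ENNReal.ofReal (min 2 (Δ * ‖x - y‖) / ‖x - y‖)
        ≤ ∫⁻ x : E3, (‖V x‖₊ : ℝ≥0∞) * ENNReal.ofReal Δ :=
          lintegral_mono fun x => mul_le_mul_right (hb x) _
      _ = (∫⁻ x : E3, (‖V x‖₊ : ℝ≥0∞)) * ENNReal.ofReal Δ :=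
          lintegral_mul_const' _ _ ENNReal.ofReal_ne_top
      _ = eLpNorm V (ENNReal.ofReal p) volume * ENNReal.ofReal Δ := by
          rw [← h1, eLpNorm_one_eq_lintegral_enorm]
          rfl
      _ = ENNReal.ofReal N * ENNReal.ofReal Δ := by
          rw [hNdef, ENNReal.ofReal_toReal hVp.2.ne]
      _ ≤ ENNReal.ofReal (1 * Δ ^ ((1 : ℝ) - 3 / p') * N) := by
          rw [he, Real.rpow_one, ← ENNReal.ofReal_mul hN]
          exact ENNReal.ofReal_le_ofReal (by nlinarith)
  · -- case 1 < p
    have hppos : 0 < p := lt_trans one_pos h1p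
    have hinvp : 1 / p < 1 := by rw [div_lt_one hppos]; exact h1p
    have hip' : 1 / p' = 1 - 1 / p := by linarith
    have hp'invpos : 0 < 1 / p' := by
      rw [hip']; linarith
    have hp'pos : 0 < p' := by
      rw [one_div] at hp'invpos; exact inv_pos.mp hp'invpos
    have h23 : 2 / 3 < 1 / p := by
      rw [div_lt_div_iff₀ (by norm_num) hppos]; linarith
    have h13 : 1 / p' < 1 / 3 := by rw [hip']; linarith
    have hp'3 : 3 < p' := by
      rw [div_lt_div_iff₀ hp'pos (by norm_num : (0:ℝ) < 3)] at h13; linarith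
    have hconj : Real.HolderConjugate p p' := Real.holderConjugate_iff.mpr ⟨h1p, by
      rw [← one_div, ← one_div]; exact hp'⟩
    set K := ∫ x : E3, (min 2 ‖x‖ / ‖x‖) ^ p' with hKdef
    have hKint : Integrable (fun x : E3 => (min 2 ‖x‖ / ‖x‖) ^ p') volume :=
      base_integrable hp'3
    have hK0 : 0 ≤ K :=
      integral_nonneg fun x => Real.rpow_nonneg
        (div_nonneg (le_min (by norm_num) (norm_nonneg _)) (norm_nonneg _)) _
    refine ⟨K ^ (1 / p') + 1, by positivity, fun Δ hΔ0 y => ?_⟩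
    rcases eq_or_lt_of_le hΔ0 with hΔ | hΔ
    · have hz : ∀ x : E3, ENNReal.ofReal (min 2 (Δ * ‖x - y‖) / ‖x - y‖) = 0 := by
        intro x
        rw [← hΔ, zero_mul]
        simp [min_eq_right (by norm_num : (0:ℝ) ≤ 2)]
      simp only [hz, mul_zero, lintegral_zero]
      exact zero_le
    · -- Δ > 0
      have hn : Measurable fun x : E3 => ‖x - y‖ :=
        (continuous_id.sub continuous_const).norm.measurable
      have hgm : AEMeasurable
          (fun x : E3 => ENNReal.ofReal (min 2 (Δ * ‖x - y‖) / ‖x - y‖)) volume :=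
        (((measurable_const.min (hn.const_mul Δ)).div hn).ennreal_ofReal).aemeasurable
      have hVm : AEMeasurable (fun x : E3 => (‖V x‖₊ : ℝ≥0∞)) volume :=
        hVp.aestronglyMeasurable.enorm
      have holder := ENNReal.lintegral_mul_le_Lp_mul_Lq volume hconj hVm hgm
      simp only [Pi.mul_apply] at holder
      have hf1 : (∫⁻ x : E3, (‖V x‖₊ : ℝ≥0∞) ^ p) ^ (1 / p)
          = eLpNorm V (ENNReal.ofReal p) volume := by
        rw [eLpNorm_eq_lintegral_rpow_enorm_toReal
          (by simp [ENNReal.ofReal_eq_zero]; linarith) ENNReal.ofReal_ne_top,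
          ENNReal.toReal_ofReal hppos.le]
        rfl
      -- compute the second factor
      have hmin0 : ∀ x : E3, 0 ≤ min 2 (Δ * ‖x - y‖) / ‖x - y‖ := fun x =>
        div_nonneg (le_min (by norm_num) (by positivity)) (norm_nonneg _)
      have hH : Integrable (fun x : E3 => (min 2 (Δ * ‖x - y‖) / ‖x - y‖) ^ p') volume := by
        have h2 := hKint.comp_smul (R := Δ) hΔ.ne'
        have h3 := h2.const_mul (Δ ^ p')
        have h4 : Integrable (fun x : E3 => (min 2 (Δ * ‖x‖) / ‖x‖) ^ p') volume :=
          h3.congr (Filter.Eventually.of_forall fun x =>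
            (pt_eq hp'pos.ne' hΔ x).symm)
        exact h4.comp_sub_right y
      have hT : (∫⁻ x : E3,
          (ENNReal.ofReal (min 2 (Δ * ‖x - y‖) / ‖x - y‖)) ^ p')
          = ENNReal.ofReal (Δ ^ (p' - 3) * K) := by
        have e1 : ∀ x : E3, (ENNReal.ofReal (min 2 (Δ * ‖x - y‖) / ‖x - y‖)) ^ p'
            = ENNReal.ofReal ((min 2 (Δ * ‖x - y‖) / ‖x - y‖) ^ p') := fun x =>
          ENNReal.ofReal_rpow_of_nonneg (hmin0 x) hp'pos.le
        simp only [e1]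
        rw [← ofReal_integral_eq_lintegral_ofReal hH
          (Filter.Eventually.of_forall fun x => Real.rpow_nonneg (hmin0 x) _),
          scaled_integral hp'pos.ne' hΔ y]
      have hsplit : (Δ ^ (p' - 3) * K) ^ (1 / p')
          = Δ ^ ((1 : ℝ) - 3 / p') * K ^ (1 / p') := by
        rw [Real.mul_rpow (Real.rpow_nonneg hΔ.le _) hK0, ← Real.rpow_mul hΔ.le]
        congr 1
        field_simp
      calc ∫⁻ x : E3, (‖V x‖₊ : ℝ≥0∞) * ENNReal.ofReal (min 2 (Δ * ‖x - y‖) / ‖x - y‖)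
          ≤ (∫⁻ x : E3, (‖V x‖₊ : ℝ≥0∞) ^ p) ^ (1 / p)
            * (∫⁻ x : E3, (ENNReal.ofReal (min 2 (Δ * ‖x - y‖) / ‖x - y‖)) ^ p') ^ (1 / p') :=
            holder
        _ = ENNReal.ofReal N * ENNReal.ofReal ((Δ ^ (p' - 3) * K) ^ (1 / p')) := by
            rw [hf1, hT, hNdef, ENNReal.ofReal_toReal hVp.2.ne,
              ENNReal.ofReal_rpow_of_nonneg (by positivity) (by positivity)]
        _ ≤ ENNReal.ofReal ((K ^ (1 / p') + 1) * Δ ^ ((1 : ℝ) - 3 / p') * N) := by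
            rw [← ENNReal.ofReal_mul hN, hsplit]
            apply ENNReal.ofReal_le_ofReal
            have h1 : 0 ≤ Δ ^ ((1 : ℝ) - 3 / p') := Real.rpow_nonneg hΔ.le _
            have h2 : 0 ≤ K ^ (1 / p') := Real.rpow_nonneg hK0 _
            nlinarith [mul_nonneg h1 hN]

/-- with `1/p + 1/p' = 1` (so `1 − 3/p' > 0`), there is `C = C(p,q)` with
`sup_y ∫ |V(x)| |e^{iλ|x−y|} − e^{iλ₀|x−y|}|/|x−y| dx ≤ C |λ−λ₀|^{1−3/p'} ‖V‖`
for all `λ, λ₀ ∈ ℝ`; consequently the operator `VB⁺(λ)` with kernel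
`V(x)(e^{iλ|x−y|} − e^{iλ₀|x−y|})/(4π|x−y|)` satisfies
`‖VB⁺(λ)‖_{L¹→L¹} ≤ C |λ−λ₀|^{1−3/p'} ‖V‖`. -/
theorem stmt_12 (p q p' : ℝ) (hp1 : 1 ≤ p) (hp : p < 3 / 2) (hq : 3 / 2 < q)
    (hp' : 1 / p + 1 / p' = 1)
    (V : E3 → ℝ)
    (hVp : MemLp V (ENNReal.ofReal p) volume)
    (hVq : MemLp V (ENNReal.ofReal q) volume) :
    ∃ C : ℝ, 0 < C ∧ ∀ lam lam0 : ℝ,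
      (∀ y : E3,
        (∫ x : E3, |V x| *
            ‖Complex.exp (Complex.I * lam * ‖x - y‖) -
              Complex.exp (Complex.I * lam0 * ‖x - y‖)‖ / ‖x - y‖) ≤
          C * |lam - lam0| ^ (1 - 3 / p') * Vnorm p q V) ∧
      (∀ f : E3 → ℂ, Integrable f volume →
        (∫ x : E3, ‖(V x : ℂ) * ∫ y : E3,
            (Complex.exp (Complex.I * lam * ‖x - y‖) -
              Complex.exp (Complex.I * lam0 * ‖x - y‖)) * f y /
              ((4 * Real.pi * ‖x - y‖ : ℝ) : ℂ)‖) ≤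
          C * |lam - lam0| ^ (1 - 3 / p') * Vnorm p q V * ∫ y : E3, ‖f y‖) := by
  obtain ⟨A, hA, hcore⟩ := core_bound p p' hp1 hp hp' V hVp
  have hNle : (eLpNorm V (ENNReal.ofReal p) volume).toReal ≤ Vnorm p q V := le_max_left _ _
  have hVn0 : 0 ≤ Vnorm p q V := le_trans ENNReal.toReal_nonneg hNle
  refine ⟨A, hA, fun lam lam0 => ?_⟩
  set Δ := |lam - lam0| with hΔdef
  have hΔ0 : 0 ≤ Δ := abs_nonneg _
  have he0 : 0 ≤ Δ ^ ((1 : ℝ) - 3 / p') := Real.rpow_nonneg hΔ0 _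
  set M := A * Δ ^ ((1 : ℝ) - 3 / p') * Vnorm p q V with hMdef
  have hM0 : 0 ≤ M := by positivity
  have hcore' : ∀ y : E3,
      (∫⁻ x : E3, (‖V x‖₊ : ℝ≥0∞) * ENNReal.ofReal (min 2 (Δ * ‖x - y‖) / ‖x - y‖))
        ≤ ENNReal.ofReal M := fun y =>
    (hcore Δ hΔ0 y).trans (ENNReal.ofReal_le_ofReal (by
      have : 0 ≤ A * Δ ^ ((1 : ℝ) - 3 / p') := by positivity
      calc A * Δ ^ ((1 : ℝ) - 3 / p') * (eLpNorm V (ENNReal.ofReal p) volume).toReal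
          ≤ A * Δ ^ ((1 : ℝ) - 3 / p') * Vnorm p q V :=
            mul_le_mul_of_nonneg_left hNle this
        _ = M := rfl))
  -- pointwise comparison of kernels
  have hker : ∀ x y : E3,
      ‖Complex.exp (Complex.I * lam * ‖x - y‖) -
        Complex.exp (Complex.I * lam0 * ‖x - y‖)‖ / ‖x - y‖
        ≤ min 2 (Δ * ‖x - y‖) / ‖x - y‖ := by
    intro x y
    rcases eq_or_lt_of_le (norm_nonneg (x - y)) with h | h
    · rw [← h, div_zero, div_zero]
    · exact (div_le_div_iff_of_pos_right h).mpr (exp_diff_le lam lam0 _ (norm_nonneg _))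
  constructor
  · -- part (a)
    intro y
    apply integral_le_of_lintegral_le _
      (fun x => by positivity) hM0
    refine le_trans (lintegral_mono fun x => ?_) (hcore' y)
    rw [mul_div_assoc, ENNReal.ofReal_mul (abs_nonneg _)]
    have h1 : ENNReal.ofReal |V x| = (‖V x‖₊ : ℝ≥0∞) := by
      rw [← Real.norm_eq_abs, ofReal_norm]
      rfl
    rw [h1]
    exact mul_le_mul_right (ENNReal.ofReal_le_ofReal (hker x y)) _
  · -- part (b)
    intro f hf
    have hfint : 0 ≤ ∫ y : E3, ‖f y‖ := integral_nonneg fun y => norm_nonneg _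
    apply integral_le_of_lintegral_le _ (fun x => norm_nonneg _)
      (by positivity)
    set w : E3 → E3 → ℝ := fun x y =>
      ‖Complex.exp (Complex.I * lam * ‖x - y‖) -
        Complex.exp (Complex.I * lam0 * ‖x - y‖)‖ / ‖x - y‖ with hwdef
    set c : E3 → ℝ := fun y => (4 * Real.pi)⁻¹ * ‖f y‖ with hcdef
    have hc0 : ∀ y, 0 ≤ c y := fun y => by
      have := Real.pi_pos; positivity
    set u : E3 → E3 → ℝ≥0∞ := fun x y =>
      (‖V x‖₊ : ℝ≥0∞) * (ENNReal.ofReal (c y) * ENNReal.ofReal (w x y)) with hudef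
    -- Step A : pointwise bound in x
    have stepA : ∀ x : E3,
        ENNReal.ofReal ‖(V x : ℂ) * ∫ y : E3,
          (Complex.exp (Complex.I * lam * ‖x - y‖) -
            Complex.exp (Complex.I * lam0 * ‖x - y‖)) * f y /
            ((4 * Real.pi * ‖x - y‖ : ℝ) : ℂ)‖ ≤ ∫⁻ y : E3, u x y := by
      intro x
      have hnormsplit : ∀ y : E3,
          (‖(Complex.exp (Complex.I * lam * ‖x - y‖) -
            Complex.exp (Complex.I * lam0 * ‖x - y‖)) * f y /
            ((4 * Real.pi * ‖x - y‖ : ℝ) : ℂ)‖₊ : ℝ≥0∞)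
          = ENNReal.ofReal (c y) * ENNReal.ofReal (w x y) := by
        intro y
        rw [← enorm_eq_nnnorm, ← ofReal_norm, norm_div, norm_mul, Complex.norm_real,
          Real.norm_eq_abs, _root_.abs_of_nonneg (by positivity : (0:ℝ) ≤ 4 * Real.pi * ‖x - y‖)]
        rw [← ENNReal.ofReal_mul (hc0 y)]
        congr 1
        rw [hcdef, hwdef]
        simp only []
        rw [div_eq_mul_inv, div_eq_mul_inv, mul_inv (4 * Real.pi) ‖x - y‖]
        ring
      calc ENNReal.ofReal ‖(V x : ℂ) * ∫ y : E3,
            (Complex.exp (Complex.I * lam * ‖x - y‖) -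
              Complex.exp (Complex.I * lam0 * ‖x - y‖)) * f y /
              ((4 * Real.pi * ‖x - y‖ : ℝ) : ℂ)‖
          = (‖V x‖₊ : ℝ≥0∞) * ENNReal.ofReal ‖∫ y : E3,
            (Complex.exp (Complex.I * lam * ‖x - y‖) -
              Complex.exp (Complex.I * lam0 * ‖x - y‖)) * f y /
              ((4 * Real.pi * ‖x - y‖ : ℝ) : ℂ)‖ := by
            rw [norm_mul, Complex.norm_real, ENNReal.ofReal_mul (norm_nonneg _),
              ofReal_norm]
            rfl
        _ ≤ (‖V x‖₊ : ℝ≥0∞) * ∫⁻ y : E3,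
            (‖(Complex.exp (Complex.I * lam * ‖x - y‖) -
              Complex.exp (Complex.I * lam0 * ‖x - y‖)) * f y /
              ((4 * Real.pi * ‖x - y‖ : ℝ) : ℂ)‖₊ : ℝ≥0∞) := by
            rw [ofReal_norm]
            exact mul_le_mul_right (enorm_integral_le_lintegral_enorm _) _
        _ = (‖V x‖₊ : ℝ≥0∞) * ∫⁻ y : E3,
            ENNReal.ofReal (c y) * ENNReal.ofReal (w x y) := by
            congr 1
            exact lintegral_congr hnormsplit
        _ = ∫⁻ y : E3, u x y := (lintegral_const_mul' _ _ ENNReal.coe_ne_top).symm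
    -- measurability for the swap
    have humeas : AEMeasurable (Function.uncurry u) ((volume : Measure E3).prod volume) := by
      have comp1 : AEMeasurable (fun z : E3 × E3 => (‖V z.1‖₊ : ℝ≥0∞))
          ((volume : Measure E3).prod volume) :=
        hVp.aestronglyMeasurable.comp_fst.enorm
      have comp2 : AEMeasurable (fun z : E3 × E3 => ENNReal.ofReal (c z.2))
          ((volume : Measure E3).prod volume) :=
        ((hf.norm.const_mul ((4 * Real.pi)⁻¹)).aestronglyMeasurable.comp_snd).aemeasurable.ennreal_ofReal
      have hrm : Measurable fun z : E3 × E3 => ‖z.1 - z.2‖ :=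
        (continuous_fst.sub continuous_snd).norm.measurable
      have hdm : Measurable fun z : E3 × E3 =>
          ‖Complex.exp (Complex.I * lam * ‖z.1 - z.2‖) -
            Complex.exp (Complex.I * lam0 * ‖z.1 - z.2‖)‖ := by
        apply Continuous.measurable
        apply Continuous.norm
        exact ((Complex.continuous_exp.comp (continuous_const.mul
            (Complex.continuous_ofReal.comp (continuous_fst.sub continuous_snd).norm))).sub
          (Complex.continuous_exp.comp (continuous_const.mul
            (Complex.continuous_ofReal.comp (continuous_fst.sub continuous_snd).norm))))
      have comp3 : AEMeasurable (fun z : E3 × E3 => ENNReal.ofReal (w z.1 z.2))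
          ((volume : Measure E3).prod volume) :=
        ((hdm.div hrm).ennreal_ofReal).aemeasurable
      exact comp1.mul (comp2.mul comp3)
    calc ∫⁻ x : E3, ENNReal.ofReal ‖(V x : ℂ) * ∫ y : E3,
          (Complex.exp (Complex.I * lam * ‖x - y‖) -
            Complex.exp (Complex.I * lam0 * ‖x - y‖)) * f y /
            ((4 * Real.pi * ‖x - y‖ : ℝ) : ℂ)‖
        ≤ ∫⁻ x : E3, ∫⁻ y : E3, u x y := lintegral_mono stepA
      _ = ∫⁻ y : E3, ∫⁻ x : E3, u x y := lintegral_lintegral_swap humeas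
      _ ≤ ∫⁻ y : E3, ENNReal.ofReal (c y) * ENNReal.ofReal M := by
          refine lintegral_mono fun y => ?_
          have hre : ∀ x : E3, u x y
              = ENNReal.ofReal (c y) * ((‖V x‖₊ : ℝ≥0∞) * ENNReal.ofReal (w x y)) := by
            intro x; rw [hudef]; ring
          calc (∫⁻ x : E3, u x y)
              = ENNReal.ofReal (c y) * ∫⁻ x : E3, (‖V x‖₊ : ℝ≥0∞) * ENNReal.ofReal (w x y) := by
                simp only [hre]
                exact lintegral_const_mul' _ _ ENNReal.ofReal_ne_top
            _ ≤ ENNReal.ofReal (c y) * ENNReal.ofReal M := by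
                refine mul_le_mul_right ?_ _
                refine le_trans (lintegral_mono fun x => ?_) (hcore' y)
                exact mul_le_mul_right (ENNReal.ofReal_le_ofReal (hker x y)) _
      _ = (∫⁻ y : E3, ENNReal.ofReal (c y)) * ENNReal.ofReal M :=
          lintegral_mul_const' _ _ ENNReal.ofReal_ne_top
      _ = ENNReal.ofReal (∫ y : E3, c y) * ENNReal.ofReal M := by
          rw [ofReal_integral_eq_lintegral_ofReal (hf.norm.const_mul _)
            (Filter.Eventually.of_forall hc0)]
      _ ≤ ENNReal.ofReal (M * ∫ y : E3, ‖f y‖) := by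
          rw [← ENNReal.ofReal_mul (integral_nonneg hc0)]
          apply ENNReal.ofReal_le_ofReal
          have hcint : (∫ y : E3, c y) = (4 * Real.pi)⁻¹ * ∫ y : E3, ‖f y‖ := by
            rw [hcdef]; exact integral_const_mul _ _
          have hpi : (4 * Real.pi)⁻¹ ≤ 1 := by
            rw [inv_le_one_iff₀]; right; nlinarith [Real.pi_gt_three]
          rw [hcint]
          have h4 : 0 < 4 * Real.pi := by nlinarith [Real.pi_gt_three]
          nlinarith [mul_nonneg hM0 hfint]
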